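/- Let X = PPᵀ where P ∈ {0,1}^{n×k}. Then for all disjoint subsets S, S' ⊆ [n], ∑_{i∈S}∑_{j∈S'} X_{ij} ≤ ∑_{i∈S'} X_{ii} + ∑_{i,j∈S, i<j} X_{ij} + ∑_{i,j∈S', i<j} X_{ij}. -/

import Mathlib

-- square of a sum in terms of diagonal + ordered pairs
lemma pair_sum {n : ℕ} (T : Finset (Fin n)) (f : Fin n → ℕ) :
    (∑ i ∈ T, f i) * (∑ i ∈ T, f i) =
      ∑ i ∈ T, f i * f i + 2 * ∑ i ∈ T, ∑ j ∈ T.filter (fun j => i < j), f i * f j := by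
  have swap : ∑ i ∈ T, ∑ j ∈ T.filter (fun j => j < i), f i * f j
      = ∑ i ∈ T, ∑ j ∈ T.filter (fun j => i < j), f i * f j := by
    simp only [Finset.sum_filter]
    rw [Finset.sum_comm]
    exact Finset.sum_congr rfl fun i _ => Finset.sum_congr rfl fun j _ => by
      by_cases h : i < j <;> simp [h, mul_comm]
  rw [Finset.sum_mul_sum]
  have hsplit : ∀ i ∈ T, ∑ j ∈ T, f i * f j
      = f i * f i + (∑ j ∈ T.filter (fun j => i < j), f i * f j
          + ∑ j ∈ T.filter (fun j => j < i), f i * f j) := by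
    intro i hi
    rw [← Finset.add_sum_erase _ _ hi]
    congr 1
    rw [← Finset.sum_filter_add_sum_filter_not (T.erase i) (fun j => i < j)]
    congr 1
    · apply Finset.sum_congr _ fun _ _ => rfl
      ext j; simp only [Finset.mem_filter, Finset.mem_erase]
      constructor
      · rintro ⟨⟨hne, hj⟩, hlt⟩; exact ⟨hj, hlt⟩
      · rintro ⟨hj, hlt⟩; exact ⟨⟨(ne_of_gt hlt), hj⟩, hlt⟩
    · apply Finset.sum_congr _ fun _ _ => rfl
      ext j; simp only [Finset.mem_filter, Finset.mem_erase]
      constructor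
      · rintro ⟨⟨hne, hj⟩, hnlt⟩; exact ⟨hj, lt_of_le_of_ne (not_lt.mp hnlt) hne⟩
      · rintro ⟨hj, hlt⟩; exact ⟨⟨(ne_of_lt hlt), hj⟩, not_lt.mpr (le_of_lt hlt)⟩
  rw [Finset.sum_congr rfl hsplit, Finset.sum_add_distrib, Finset.sum_add_distrib, swap]
  ring

lemma key_ineq (A B u v : ℕ) (hA : A * A = A + 2 * u) (hB : B * B = B + 2 * v) :
    A * B ≤ B + u + v := by
  have hx : ∀ x : ℕ, x ≤ x * x := by
    intro x
    rcases Nat.eq_zero_or_pos x with h | h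
    · simp [h]
    · calc x = x * 1 := (mul_one x).symm
        _ ≤ x * x := Nat.mul_le_mul_left x h
  rcases le_total A B with h | h
  · have hy := Nat.sub_add_cancel h
    nlinarith [hx (B - A), hy]
  · have hy := Nat.sub_add_cancel h
    nlinarith [hx (A - B), hy]

theorem stmt_4 {n k : ℕ} (P : Fin n → Fin k → ℕ)
    (hP : ∀ i c, P i c = 0 ∨ P i c = 1)
    (X : Fin n → Fin n → ℕ)
    (hX : ∀ i j, X i j = ∑ c, P i c * P j c)
    (S S' : Finset (Fin n)) (hdisj : Disjoint S S') :
    ∑ i ∈ S, ∑ j ∈ S', X i j ≤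
      (∑ i ∈ S', X i i) + (∑ i ∈ S, ∑ j ∈ S.filter (fun j => i < j), X i j) +
        (∑ i ∈ S', ∑ j ∈ S'.filter (fun j => i < j), X i j) := by
  simp only [hX]
  have hsq : ∀ (i : Fin n) (c : Fin k), P i c * P i c = P i c := fun i c => by
    rcases hP i c with h | h <;> simp [h]
  have hcomm3 : ∀ (T : Finset (Fin n)) (U : Fin n → Finset (Fin n)),
      ∑ i ∈ T, ∑ j ∈ U i, ∑ c, P i c * P j c
        = ∑ c, ∑ i ∈ T, ∑ j ∈ U i, P i c * P j c := by
    intro T U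
    calc ∑ i ∈ T, ∑ j ∈ U i, ∑ c, P i c * P j c
        = ∑ i ∈ T, ∑ c, ∑ j ∈ U i, P i c * P j c :=
          Finset.sum_congr rfl fun i _ => Finset.sum_comm
      _ = ∑ c, ∑ i ∈ T, ∑ j ∈ U i, P i c * P j c := Finset.sum_comm
  rw [hcomm3 S (fun _ => S'), hcomm3 S (fun i => S.filter (fun j => i < j)),
    hcomm3 S' (fun i => S'.filter (fun j => i < j)), Finset.sum_comm (s := S')]
  rw [← Finset.sum_add_distrib, ← Finset.sum_add_distrib]
  apply Finset.sum_le_sum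
  intro c _
  have hA := pair_sum S (fun i => P i c)
  have hB := pair_sum S' (fun i => P i c)
  simp only [hsq] at hA hB
  rw [← Finset.sum_mul_sum]
  simp only [hsq]
  exact key_ineq _ _ _ _ hA hB
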